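/- arXiv:2509.15537 — 4 statements merged into one kernel-verified Lean document; each statement's English description precedes it below -/
import Mathlib

section
/- Let G be a simple graph on a vertex type V, let v1 and v3 be distinct vertices, and let G' be the clasp of G at (v1, v3). Then for every vertex v with v ≠ v1 and v ≠ v3: if the neighborhood of v in G is a singleton {w}, then the neighborhood of v in G' is also a singleton; precisely, if w = v3 then the neighborhood of v in G' is {v1}, and if w ≠ v3 then the neighborhood of v in G' is {w}. -/
/-- The clasp of a simple graph `G` at a pair of vertices `(v₁, v₃)`: `x` and `y` are
adjacent in the clasp iff `{x, y} = {v₁, v₃}`, or `v₃ ∉ {x, y}` and (`x` and `y` are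
adjacent in `G`, or `x = v₁` and `y` is adjacent to `v₃` in `G`, or `y = v₁` and `x`
is adjacent to `v₃` in `G`).  (As a simple graph it is in addition loopless.) -/
def SimpleGraph.clasp {V : Type*} (G : SimpleGraph V) (v₁ v₃ : V) : SimpleGraph V :=
  SimpleGraph.fromRel (fun x y =>
    s(x, y) = s(v₁, v₃) ∨
      (x ≠ v₃ ∧ y ≠ v₃ ∧
        (G.Adj x y ∨ (x = v₁ ∧ G.Adj v₃ y) ∨ (y = v₁ ∧ G.Adj v₃ x))))

/-- Let `G'` be the clasp of `G` at `(v₁, v₃)` with `v₁ ≠ v₃`.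
For every vertex `v ∉ {v₁, v₃}` whose neighborhood in `G` is a singleton `{w}`,
the neighborhood of `v` in `G'` is again a singleton: it is `{v₁}` if `w = v₃`,
and `{w}` if `w ≠ v₃`. -/
theorem stmt_3 {V : Type*} (G : SimpleGraph V) (v₁ v₃ : V) (h₁₃ : v₁ ≠ v₃)
    (v w : V) (hv₁ : v ≠ v₁) (hv₃ : v ≠ v₃)
    (hN : G.neighborSet v = {w}) :
    (w = v₃ → (G.clasp v₁ v₃).neighborSet v = {v₁}) ∧
      (w ≠ v₃ → (G.clasp v₁ v₃).neighborSet v = {w}) := by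
  have hA : ∀ u, G.Adj v u ↔ u = w := by
    intro u
    have := Set.ext_iff.mp hN u
    simpa [SimpleGraph.neighborSet] using this
  have hA' : ∀ u, G.Adj u v ↔ u = w := by
    intro u; rw [G.adj_comm]; exact hA u
  have hwv : w ≠ v := fun h => G.irrefl (h ▸ (hA w).mpr rfl)
  constructor
  · rintro rfl
    ext u
    simp only [SimpleGraph.neighborSet, SimpleGraph.clasp, SimpleGraph.fromRel_adj,
      Set.mem_setOf_eq, Set.mem_singleton_iff, Sym2.eq, Sym2.rel_iff', Prod.mk.injEq,
      Prod.swap_prod_mk, hA, hA']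
    constructor
    · rintro ⟨hne, h | h⟩ <;> tauto
    · rintro rfl; tauto
  · intro hwv₃
    ext u
    simp only [SimpleGraph.neighborSet, SimpleGraph.clasp, SimpleGraph.fromRel_adj,
      Set.mem_setOf_eq, Set.mem_singleton_iff, Sym2.eq, Sym2.rel_iff', Prod.mk.injEq,
      Prod.swap_prod_mk, hA, hA']
    constructor
    · rintro ⟨hne, h | h⟩ <;>
      · rcases h with h | ⟨h1, h2, h3⟩ <;> try tauto
    · rintro rfl
      exact ⟨hwv.symm, Or.inl (Or.inr ⟨hv₃, hwv₃, Or.inl rfl⟩)⟩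
end

section
/- Let G be a connected simple graph on a vertex type V, let v1 and v3 be distinct vertices, and let G' be the clasp of G at (v1, v3). Then G' is connected. -/
/-- If `G` is a connected simple graph and `v₁ ≠ v₃`, then the clasp
of `G` at `(v₁, v₃)` is connected. -/
theorem stmt_4 {V : Type*} (G : SimpleGraph V) (v₁ v₃ : V) (h₁₃ : v₁ ≠ v₃)
    (hconn : G.Connected) :
    (G.clasp v₁ v₃).Connected := by
  classical
  set G' := G.clasp v₁ v₃ with hG'
  have hadj13 : G'.Adj v₁ v₃ := by
    rw [hG', SimpleGraph.clasp, SimpleGraph.fromRel_adj]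
    exact ⟨h₁₃, Or.inl (Or.inl rfl)⟩
  have key : ∀ x y : V, G.Adj x y →
      G'.Reachable (if x = v₃ then v₁ else x) (if y = v₃ then v₁ else y) := by
    intro x y hxy
    by_cases hx : x = v₃
    · by_cases hy : y = v₃
      · exact absurd (hx ▸ hy ▸ hxy) G.irrefl
      · rw [if_pos hx, if_neg hy]
        by_cases hy1 : y = v₁
        · rw [hy1]
        · refine SimpleGraph.Adj.reachable ?_
          rw [hG', SimpleGraph.clasp, SimpleGraph.fromRel_adj]
          exact ⟨fun h => hy1 h.symm,
            Or.inl (Or.inr ⟨h₁₃, hy, Or.inr (Or.inl ⟨rfl, hx ▸ hxy⟩)⟩)⟩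
    · by_cases hy : y = v₃
      · rw [if_neg hx, if_pos hy]
        by_cases hx1 : x = v₁
        · rw [hx1]
        · refine (SimpleGraph.Adj.reachable ?_).symm
          rw [hG', SimpleGraph.clasp, SimpleGraph.fromRel_adj]
          exact ⟨fun h => hx1 h.symm,
            Or.inl (Or.inr ⟨h₁₃, hx, Or.inr (Or.inl ⟨rfl, hy ▸ hxy.symm⟩)⟩)⟩
      · rw [if_neg hx, if_neg hy]
        refine SimpleGraph.Adj.reachable ?_
        rw [hG', SimpleGraph.clasp, SimpleGraph.fromRel_adj]
        exact ⟨hxy.ne, Or.inl (Or.inr ⟨hx, hy, Or.inl hxy⟩)⟩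
  have h1 : ∀ x y : V, G.Reachable x y →
      G'.Reachable (if x = v₃ then v₁ else x) (if y = v₃ then v₁ else y) := by
    intro x y h
    obtain ⟨w⟩ := h
    induction w with
    | nil => exact SimpleGraph.Reachable.refl _
    | cons h p ih => exact (key _ _ h).trans ih
  have reach : ∀ x : V, G'.Reachable v₁ x := by
    intro x
    by_cases hx : x = v₃
    · exact hx ▸ hadj13.reachable
    · simpa [h₁₃, hx] using h1 v₁ x (hconn.preconnected v₁ x)
  rw [SimpleGraph.connected_iff]
  exact ⟨fun x y => (reach x).symm.trans (reach y), hconn.nonempty⟩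
end

section
/- Let G be a connected simple graph on a finite vertex type V whose number of edges equals its number of vertices, and let C be a cycle in G of length exactly 4 passing consecutively through vertices v1, v2, v3. Let G' be the clasp of G at (v1, v3). Then G' is a tree: G' is connected and contains no cycle, and the number of edges of G' equals |V| - 1. -/
namespace SimpleGraph

variable {V : Type*}

lemma reach_of_adj_reach {G H : SimpleGraph V}
    (h : ∀ x y, G.Adj x y → H.Reachable x y) {a b : V} (r : G.Reachable a b) :
    H.Reachable a b := by
  obtain ⟨p⟩ := r
  induction p with
  | nil => exact Reachable.refl _
  | cons ha _ ih => exact (h _ _ ha).trans ih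

lemma connected_of_adj_reach {G H : SimpleGraph V}
    (h : ∀ x y, G.Adj x y → H.Reachable x y) (hc : G.Connected) : H.Connected := by
  have : Nonempty V := hc.nonempty
  exact ⟨fun a b => reach_of_adj_reach h (hc.preconnected a b)⟩

lemma connected_delete_cycle_edge {H : SimpleGraph V} (hc : H.Connected)
    {u : V} {c : H.Walk u u} (hcyc : c.IsCycle) {e : Sym2 V} (he : e ∈ c.edges) :
    (H \ fromEdgeSet {e}).Connected := by
  induction e using Sym2.ind with
  | _ x y =>
    have hr : (H \ fromEdgeSet {s(x, y)}).Reachable x y :=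
      (adj_and_reachable_delete_edges_iff_exists_cycle.mpr ⟨u, c, hcyc, he⟩).2
    refine connected_of_adj_reach (fun a b hab => ?_) hc
    by_cases h : s(a, b) = s(x, y)
    · rw [Sym2.eq_iff] at h
      rcases h with ⟨rfl, rfl⟩ | ⟨rfl, rfl⟩
      · exact hr
      · exact hr.symm
    · exact Adj.reachable (by simp [hab, h])

lemma edgeSet_delete_edge (H : SimpleGraph V) (e : Sym2 V) (he : e ∈ H.edgeSet) :
    (H \ fromEdgeSet {e}).edgeSet = H.edgeSet \ {e} := by
  rw [edgeSet_sdiff, edgeSet_fromEdgeSet]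
  rw [Set.diff_diff_right]
  have : H.edgeSet ∩ {e' : Sym2 V | e'.IsDiag} = ∅ := by
    ext e'
    simp only [Set.mem_inter_iff, Set.mem_setOf_eq, Set.mem_empty_iff_false, iff_false]
    rintro ⟨h1, h2⟩
    exact (H.not_isDiag_of_mem_edgeSet h1) h2
  rw [show H.edgeSet ∩ Sym2.diagSet = ∅ from this, Set.union_empty]

lemma card_le_of_connected [Fintype V] :
    ∀ (n : ℕ) (H : SimpleGraph V), H.edgeSet.ncard = n → H.Connected →
      Fintype.card V ≤ n + 1 := by
  intro n
  induction n using Nat.strong_induction_on with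
  | _ n ih =>
    intro H hn hc
    by_cases hac : H.IsAcyclic
    · classical
      have ht : H.IsTree := ⟨hc, hac⟩
      have := ht.card_edgeFinset
      have he : H.edgeFinset.card = H.edgeSet.ncard := (Set.ncard_eq_toFinset_card' _).symm
      omega
    · simp only [IsAcyclic, not_forall, not_not] at hac
      obtain ⟨u, c, hcyc⟩ := hac
      have hne : c.edges ≠ [] := by
        intro h
        have := hcyc.three_le_length
        have : c.edges.length = c.length := c.length_edges
        simp [h] at this
        omega
      obtain ⟨e, he⟩ := List.exists_mem_of_ne_nil _ hne
      have heH : e ∈ H.edgeSet := c.edges_subset_edgeSet he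
      have hfin : H.edgeSet.Finite := Set.toFinite _
      have hpos : 1 ≤ n := by
        have : H.edgeSet.Nonempty := ⟨e, heH⟩
        have := Set.ncard_pos hfin |>.mpr this
        omega
      have hconn' := connected_delete_cycle_edge hc hcyc he
      have hcard' : (H \ fromEdgeSet {e}).edgeSet.ncard = n - 1 := by
        rw [edgeSet_delete_edge H e heH, Set.ncard_diff_singleton_of_mem heH, hn]
      have := ih (n - 1) (by omega) _ hcard' hconn'
      omega



variable {V : Type*} {G : SimpleGraph V} {v₁ v₃ : V}

lemma clasp_adj {x y : V} :
    (G.clasp v₁ v₃).Adj x y ↔ x ≠ y ∧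
      (s(x, y) = s(v₁, v₃) ∨
        (x ≠ v₃ ∧ y ≠ v₃ ∧
          (G.Adj x y ∨ (x = v₁ ∧ G.Adj v₃ y) ∨ (y = v₁ ∧ G.Adj v₃ x)))) := by
  simp only [clasp, fromRel_adj]
  constructor
  · rintro ⟨hne, h | h⟩
    · exact ⟨hne, h⟩
    · refine ⟨hne, ?_⟩
      rcases h with h | ⟨h1, h2, h3⟩
      · exact Or.inl ((Sym2.eq_swap).trans h)
      · exact Or.inr ⟨h2, h1, by tauto⟩
  · rintro ⟨hne, h⟩
    exact ⟨hne, Or.inl h⟩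

lemma clasp_adj_v₁v₃ (h₁₃ : v₁ ≠ v₃) : (G.clasp v₁ v₃).Adj v₁ v₃ :=
  clasp_adj.mpr ⟨h₁₃, Or.inl rfl⟩

lemma clasp_adj_of_adj {x y : V} (hx : x ≠ v₃) (hy : y ≠ v₃) (h : G.Adj x y) :
    (G.clasp v₁ v₃).Adj x y :=
  clasp_adj.mpr ⟨h.ne, Or.inr ⟨hx, hy, Or.inl h⟩⟩

lemma clasp_adj_v₁_of_adj_v₃ (h₁₃ : v₁ ≠ v₃) {y : V} (hy : y ≠ v₁) (h : G.Adj v₃ y) :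
    (G.clasp v₁ v₃).Adj v₁ y :=
  clasp_adj.mpr ⟨hy.symm, Or.inr ⟨h₁₃, h.ne', Or.inr (Or.inl ⟨rfl, h⟩)⟩⟩

lemma clasp_reach_of_adj (h₁₃ : v₁ ≠ v₃) {x y : V} (hxy : G.Adj x y) :
    (G.clasp v₁ v₃).Reachable x y := by
  have key : ∀ z : V, G.Adj v₃ z → (G.clasp v₁ v₃).Reachable v₃ z := by
    intro z hz
    by_cases hz1 : z = v₁
    · subst hz1; exact (clasp_adj_v₁v₃ h₁₃).symm.reachable
    · exact ((clasp_adj_v₁v₃ h₁₃).symm.reachable).trans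
        (clasp_adj_v₁_of_adj_v₃ h₁₃ hz1 hz).reachable
  by_cases hx : x = v₃
  · subst hx; exact key y hxy
  · by_cases hy : y = v₃
    · subst hy; exact (key x hxy.symm).symm
    · exact (clasp_adj_of_adj hx hy hxy).reachable

lemma eq_v₁_of_clasp_adj_v₃ (h₁₃ : v₁ ≠ v₃) {x : V} (h : (G.clasp v₁ v₃).Adj x v₃) :
    x = v₁ := by
  rcases clasp_adj.mp h with ⟨hne, h | ⟨_, h2, _⟩⟩
  · rw [Sym2.eq_iff] at h
    rcases h with ⟨h, -⟩ | ⟨-, h⟩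
    · exact h
    · exact absurd h.symm h₁₃
  · exact absurd rfl h2

/-- new clasp edges not in G and not s(v₁,v₃) are of the form s(v₁,y), G.Adj v₃ y. -/
lemma clasp_new_edge {x y : V} (h : (G.clasp v₁ v₃).Adj x y)
    (hG : s(x, y) ∉ G.edgeSet) (hne : s(x, y) ≠ s(v₁, v₃)) :
    ∃ z : V, s(x, y) = s(v₁, z) ∧ G.Adj v₃ z ∧ z ≠ v₁ ∧ z ≠ v₃ := by
  rcases clasp_adj.mp h with ⟨hxy, h | ⟨h1, h2, h3 | ⟨rfl, h3⟩ | ⟨rfl, h3⟩⟩⟩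
  · exact absurd h hne
  · exact absurd h3 hG
  · exact ⟨y, rfl, h3, Ne.symm hxy, h2⟩
  · exact ⟨x, Sym2.eq_swap, h3, hxy, h1⟩


lemma exists_fourth_vertex {G : SimpleGraph V} {u : V} {C : G.Walk u u} (hC : C.IsCycle)
    (hk : C.length = 4) {v₁ v₂ v₃ : V} (h₁₂ : v₁ ≠ v₂) (h₂₃ : v₂ ≠ v₃) (h₁₃ : v₁ ≠ v₃)
    (he₁ : s(v₁, v₂) ∈ C.edges) (he₂ : s(v₂, v₃) ∈ C.edges) :
    ∃ w : V, G.Adj v₁ w ∧ G.Adj v₃ w ∧ w ≠ v₁ ∧ w ≠ v₂ ∧ w ≠ v₃ := by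
  cases C with
  | nil => simp at hk
  | cons h1 p =>
  cases p with
  | nil => simp at hk
  | cons h2 p =>
  cases p with
  | nil => simp at hk
  | cons h3 p =>
  cases p with
  | nil => simp at hk
  | cons h4 p =>
  cases p with
  | cons h5 p => simp [Walk.length_cons] at hk
  | nil =>
  clear hk
  rename_i a b c
  -- nodup facts
  have hnd := hC.2
  simp only [Walk.support_cons, Walk.support_nil, List.tail_cons, List.nodup_cons,
    List.mem_cons, List.mem_singleton, List.not_mem_nil, or_false, List.nodup_nil,
    and_true, not_or] at hnd
  obtain ⟨⟨hab, hac, hau⟩, ⟨hbc, hbu⟩, hcu, -⟩ := hnd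
  simp only [Walk.edges_cons, Walk.edges_nil, List.mem_cons, List.not_mem_nil, or_false,
    Sym2.eq_iff] at he₁ he₂
  rcases he₁ with (⟨e1, e2⟩ | ⟨e1, e2⟩) | (⟨e1, e2⟩ | ⟨e1, e2⟩) |
    (⟨e1, e2⟩ | ⟨e1, e2⟩) | (⟨e1, e2⟩ | ⟨e1, e2⟩) <;>
  rcases he₂ with (⟨e3, e4⟩ | ⟨e3, e4⟩) | (⟨e3, e4⟩ | ⟨e3, e4⟩) |
    (⟨e3, e4⟩ | ⟨e3, e4⟩) | (⟨e3, e4⟩ | ⟨e3, e4⟩) <;>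
  subst_vars <;>
  first
    | exact absurd rfl h₁₂
    | exact absurd rfl h₂₃
    | exact absurd rfl h₁₃
    | exact absurd rfl hab | exact absurd rfl hac | exact absurd rfl hau
    | exact absurd rfl hbc | exact absurd rfl hbu | exact absurd rfl hcu
    | (refine ⟨u, ?_, ?_, ?_, ?_, ?_⟩ <;>
        first | assumption | (apply Ne.symm; assumption) | (apply SimpleGraph.Adj.symm; assumption))
    | (refine ⟨a, ?_, ?_, ?_, ?_, ?_⟩ <;>
        first | assumption | (apply Ne.symm; assumption) | (apply SimpleGraph.Adj.symm; assumption))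
    | (refine ⟨b, ?_, ?_, ?_, ?_, ?_⟩ <;>
        first | assumption | (apply Ne.symm; assumption) | (apply SimpleGraph.Adj.symm; assumption))
    | (refine ⟨c, ?_, ?_, ?_, ?_, ?_⟩ <;>
        first | assumption | (apply Ne.symm; assumption) | (apply SimpleGraph.Adj.symm; assumption))



lemma clasp_edge_v₃ {V : Type*} {G : SimpleGraph V} {v₁ v₃ : V} (h₁₃ : v₁ ≠ v₃)
    {e : Sym2 V} (he : e ∈ (G.clasp v₁ v₃).edgeSet) (hv : v₃ ∈ e) : e = s(v₁, v₃) := by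
  induction e using Sym2.ind with
  | _ x y =>
    rw [Sym2.mem_iff] at hv
    rcases hv with rfl | rfl
    · rw [mem_edgeSet] at he
      rw [eq_v₁_of_clasp_adj_v₃ h₁₃ he.symm, Sym2.eq_swap]
    · rw [mem_edgeSet] at he
      rw [eq_v₁_of_clasp_adj_v₃ h₁₃ he]

open Classical in
lemma clasp_card_lt {V : Type*} {G : SimpleGraph V} {v₁ v₂ v₃ w : V}
    (h₁₂ : v₁ ≠ v₂) (h₂₃ : v₂ ≠ v₃) (h₁₃ : v₁ ≠ v₃)
    (he₁G : s(v₁, v₂) ∈ G.edgeSet) (he₂G : s(v₂, v₃) ∈ G.edgeSet)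
    (hw1 : G.Adj v₁ w) (hw3 : G.Adj v₃ w) (hwv1 : w ≠ v₁) (hwv2 : w ≠ v₂) (hwv3 : w ≠ v₃)
    (hfin : G.edgeSet.Finite) :
    (G.clasp v₁ v₃).edgeSet.ncard < G.edgeSet.ncard := by
  set K := G.clasp v₁ v₃ with hK
  let f : Sym2 V → Sym2 V := fun e =>
    if e ∈ G.edgeSet then e
    else if e = s(v₁, v₃) then s(v₂, v₃)
    else Sym2.map (fun x => if x = v₁ then v₃ else x) e
  have hfnew : ∀ z : V, z ≠ v₁ → s(v₁, z) ∉ G.edgeSet → s(v₁, z) ≠ s(v₁, v₃) →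
      f s(v₁, z) = s(v₃, z) := by
    intro z hz h1 h2
    show (if _ then _ else if _ then _ else _) = _
    rw [if_neg h1, if_neg h2, Sym2.map_pair_eq, if_pos rfl, if_neg hz]
  have hcases : ∀ e ∈ K.edgeSet, (e ∈ G.edgeSet ∧ f e = e) ∨
      (e ∉ G.edgeSet ∧ e = s(v₁, v₃) ∧ f e = s(v₂, v₃)) ∨
      (∃ z : V, e ∉ G.edgeSet ∧ e = s(v₁, z) ∧ G.Adj v₃ z ∧ z ≠ v₁ ∧ z ≠ v₃ ∧
        f e = s(v₃, z)) := by
    intro e he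
    by_cases h1 : e ∈ G.edgeSet
    · exact Or.inl ⟨h1, if_pos h1⟩
    · by_cases h2 : e = s(v₁, v₃)
      · exact Or.inr (Or.inl ⟨h1, h2, by simp only [f, if_neg h1, if_pos h2]⟩)
      · refine Or.inr (Or.inr ?_)
        induction e using Sym2.ind with
        | _ x y =>
          rw [mem_edgeSet] at he
          obtain ⟨z, hez, hadj, hz1, hz3⟩ := clasp_new_edge he h1 h2
          exact ⟨z, h1, hez, hadj, hz1, hz3,
            by rw [hez]; exact hfnew z hz1 (hez ▸ h1) (hez ▸ h2)⟩
  have hmaps : ∀ e ∈ K.edgeSet, f e ∈ G.edgeSet \ {s(v₃, w)} := by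
    intro e he
    rcases hcases e he with ⟨h1, hfe⟩ | ⟨h1, he2, hfe⟩ | ⟨z, h1, hez, hadj, hz1, hz3, hfe⟩
    · rw [hfe]
      refine ⟨h1, ?_⟩
      intro hmem
      rw [Set.mem_singleton_iff] at hmem
      have heq3 : e = s(v₁, v₃) := clasp_edge_v₃ h₁₃ he (by rw [hmem]; simp)
      rw [heq3] at hmem
      rw [Sym2.eq_iff] at hmem
      rcases hmem with ⟨h, -⟩ | ⟨h, -⟩
      · exact h₁₃ h
      · exact hwv1 h.symm
    · rw [hfe]
      refine ⟨he₂G, ?_⟩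
      intro hmem
      rw [Set.mem_singleton_iff, Sym2.eq_iff] at hmem
      rcases hmem with ⟨h, -⟩ | ⟨h, -⟩
      · exact h₂₃ h
      · exact hwv2 h.symm
    · rw [hfe]
      refine ⟨hadj, ?_⟩
      intro hmem
      rw [Set.mem_singleton_iff, Sym2.eq_iff] at hmem
      rcases hmem with ⟨-, h⟩ | ⟨h, -⟩
      · subst h
        exact h1 (hez ▸ hw1)
      · exact hwv3 h.symm
  have hinj : Set.InjOn f K.edgeSet := by
    intro e he e' he' heq
    rcases hcases e he with ⟨h1, hfe⟩ | ⟨h1, he2, hfe⟩ | ⟨z, h1, hez, hadj, hz1, hz3, hfe⟩ <;>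
      rcases hcases e' he' with ⟨h1', hfe'⟩ | ⟨h1', he2', hfe'⟩ |
        ⟨z', h1', hez', hadj', hz1', hz3', hfe'⟩
    · rw [hfe, hfe'] at heq; exact heq
    · rw [hfe, hfe'] at heq
      have heq3 : e = s(v₁, v₃) := clasp_edge_v₃ h₁₃ he (by rw [heq]; simp)
      rw [heq3, Sym2.eq_iff] at heq
      rcases heq with ⟨h, -⟩ | ⟨h, -⟩
      · exact absurd h h₁₂
      · exact absurd h h₁₃
    · rw [hfe, hfe'] at heq
      have heq3 : e = s(v₁, v₃) := clasp_edge_v₃ h₁₃ he (by rw [heq]; simp)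
      rw [heq3, Sym2.eq_iff] at heq
      rcases heq with ⟨h, h'⟩ | ⟨h, -⟩
      · exact absurd h h₁₃
      · exact absurd h.symm hz1'
    · rw [hfe, hfe'] at heq
      have heq3 : e' = s(v₁, v₃) := clasp_edge_v₃ h₁₃ he' (by rw [← heq]; simp)
      rw [heq3, Sym2.eq_iff] at heq
      rcases heq with ⟨h, -⟩ | ⟨h, -⟩
      · exact absurd h.symm h₁₂
      · exact absurd h h₂₃
    · rw [he2, he2']
    · rw [hfe, hfe'] at heq
      rw [Sym2.eq_iff] at heq
      rcases heq with ⟨h, -⟩ | ⟨h, -⟩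
      · exact absurd h h₂₃
      · rw [hez', ← h] at h1'
        exact absurd he₁G h1'
    · rw [hfe, hfe'] at heq
      have heq3 : e' = s(v₁, v₃) := clasp_edge_v₃ h₁₃ he' (by rw [← heq]; simp)
      rw [heq3, Sym2.eq_iff] at heq
      rcases heq with ⟨h, h'⟩ | ⟨-, h⟩
      · exact absurd h.symm h₁₃
      · exact absurd h hz1
    · rw [hfe, hfe'] at heq
      rw [Sym2.eq_iff] at heq
      rcases heq with ⟨h, -⟩ | ⟨-, h⟩
      · exact absurd h.symm h₂₃
      · rw [hez, h] at h1
        exact absurd he₁G h1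
    · rw [hfe, hfe'] at heq
      rw [Sym2.eq_iff] at heq
      rcases heq with ⟨-, h⟩ | ⟨-, h⟩
      · rw [hez, hez', h]
      · exact absurd h hz3
  have himg : f '' K.edgeSet ⊆ G.edgeSet \ {s(v₃, w)} := by
    rintro _ ⟨e, he, rfl⟩
    exact hmaps e he
  have hwG : s(v₃, w) ∈ G.edgeSet := hw3
  calc K.edgeSet.ncard = (f '' K.edgeSet).ncard := (Set.ncard_image_of_injOn hinj).symm
    _ ≤ (G.edgeSet \ {s(v₃, w)}).ncard := Set.ncard_le_ncard himg hfin.diff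
    _ < G.edgeSet.ncard := Set.ncard_diff_singleton_lt_of_mem hwG hfin

end SimpleGraph

open SimpleGraph

/-- Let `G` be a connected simple graph on a finite vertex type whose
number of edges equals its number of vertices, and let `C` be a cycle in `G` of length
exactly `4` passing consecutively through vertices `v₁, v₂, v₃`. Let `G'` be the clasp
of `G` at `(v₁, v₃)`. Then `G'` is a tree: it is connected and acyclic, and its number
of edges equals `|V| - 1`. -/
theorem stmt_7 {V : Type*} [Fintype V] [DecidableEq V]
    (G : SimpleGraph V) [DecidableRel G.Adj]
    (hconn : G.Connected)
    (hcard : G.edgeFinset.card = Fintype.card V)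
    (u : V) (C : G.Walk u u) (hC : C.IsCycle)
    (hk : C.length = 4)
    (v₁ v₂ v₃ : V) (h₁₂ : v₁ ≠ v₂) (h₂₃ : v₂ ≠ v₃) (h₁₃ : v₁ ≠ v₃)
    (he₁ : s(v₁, v₂) ∈ C.edges) (he₂ : s(v₂, v₃) ∈ C.edges) :
    (G.clasp v₁ v₃).Connected ∧
      (G.clasp v₁ v₃).IsAcyclic ∧
      (G.clasp v₁ v₃).edgeSet.ncard = Fintype.card V - 1 := by
  classical
  set K := G.clasp v₁ v₃ with hK
  have hKconn : K.Connected :=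
    connected_of_adj_reach (fun x y h => clasp_reach_of_adj h₁₃ h) hconn
  have hGcard : G.edgeSet.ncard = Fintype.card V := by
    rw [← hcard, ← Set.ncard_coe_finset, coe_edgeFinset]
  obtain ⟨w, hw1, hw3, hwv1, hwv2, hwv3⟩ :=
    exists_fourth_vertex hC hk h₁₂ h₂₃ h₁₃ he₁ he₂
  have hlt : K.edgeSet.ncard < Fintype.card V := by
    rw [← hGcard]
    exact clasp_card_lt h₁₂ h₂₃ h₁₃ (C.edges_subset_edgeSet he₁) (C.edges_subset_edgeSet he₂)
      hw1 hw3 hwv1 hwv2 hwv3 (Set.toFinite _)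
  have hge : Fintype.card V ≤ K.edgeSet.ncard + 1 :=
    card_le_of_connected K.edgeSet.ncard K rfl hKconn
  have hV2 : 2 ≤ Fintype.card V := Fintype.one_lt_card_iff_nontrivial.mpr ⟨⟨v₁, v₃, h₁₃⟩⟩
  refine ⟨hKconn, ?_, by omega⟩
  intro u' c hc
  have hne : c.edges ≠ [] := by
    intro h
    have h3 := hc.three_le_length
    have hlen : c.edges.length = c.length := c.length_edges
    simp [h] at hlen
    omega
  obtain ⟨e, he⟩ := List.exists_mem_of_ne_nil _ hne
  have heK : e ∈ K.edgeSet := c.edges_subset_edgeSet he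
  have hconn' := connected_delete_cycle_edge hKconn hc he
  have hfinK : K.edgeSet.Finite := Set.toFinite _
  have hcard' : (K \ fromEdgeSet {e}).edgeSet.ncard = K.edgeSet.ncard - 1 := by
    rw [edgeSet_delete_edge K e heK, Set.ncard_diff_singleton_of_mem heK]
  have hpos : 1 ≤ K.edgeSet.ncard := by
    have hne' : K.edgeSet.Nonempty := ⟨e, heK⟩
    have := (Set.ncard_pos hfinK).mpr hne'
    omega
  have hfinal := card_le_of_connected _ (K \ fromEdgeSet {e}) rfl hconn'
  omega
end

section
/- Let G be a connected simple graph on a finite vertex type V whose number of edges equals its number of vertices, and suppose G contains a cycle of even length k ≥ 4. Then there exists a sequence of simple graphs G = G_0, G_1, ..., G_{(k-2)/2} on the same vertex type V such that for each i < (k-2)/2 the graph G_{i+1} is the clasp of G_i at some pair of distinct vertices, and such that the final graph G_{(k-2)/2} is a tree (connected and acyclic). -/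
namespace ClaspAux

open SimpleGraph Walk

variable {V : Type*}

lemma clasp_adj {G : SimpleGraph V} {v₁ v₃ x y : V} :
    (G.clasp v₁ v₃).Adj x y ↔ x ≠ y ∧
      (s(x, y) = s(v₁, v₃) ∨ (x ≠ v₃ ∧ y ≠ v₃ ∧
        (G.Adj x y ∨ (x = v₁ ∧ G.Adj v₃ y) ∨ (y = v₁ ∧ G.Adj v₃ x)))) := by
  simp only [SimpleGraph.clasp, SimpleGraph.fromRel_adj]
  constructor
  · rintro ⟨hne, h | h⟩
    · exact ⟨hne, h⟩
    · refine ⟨hne, ?_⟩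
      rcases h with h | ⟨h1, h2, h3⟩
      · exact Or.inl (by rw [Sym2.eq_swap]; exact h)
      · refine Or.inr ⟨h2, h1, ?_⟩
        rcases h3 with h3 | ⟨h4, h5⟩ | ⟨h4, h5⟩
        · exact Or.inl h3.symm
        · exact Or.inr (Or.inr ⟨h4, h5⟩)
        · exact Or.inr (Or.inl ⟨h4, h5⟩)
  · rintro ⟨hne, h⟩
    exact ⟨hne, Or.inl h⟩

lemma clasp_connected {G : SimpleGraph V} (hG : G.Connected) {v₁ v₃ : V} (h13 : v₁ ≠ v₃) :
    (G.clasp v₁ v₃).Connected := by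
  classical
  have hadj31 : (G.clasp v₁ v₃).Adj v₃ v₁ :=
    clasp_adj.2 ⟨h13.symm, Or.inl (Sym2.eq_swap)⟩
  have key : ∀ x y, G.Adj x y →
      (G.clasp v₁ v₃).Reachable (if x = v₃ then v₁ else x) (if y = v₃ then v₁ else y) := by
    intro x y hxy
    by_cases hx : x = v₃
    · rw [if_pos hx]
      by_cases hy : y = v₃
      · exact absurd (hx.trans hy.symm) hxy.ne
      · rw [if_neg hy]
        by_cases hy1 : y = v₁
        · rw [hy1]
        · exact ((clasp_adj.2 ⟨hy1,
            Or.inr ⟨hy, h13, Or.inr (Or.inr ⟨rfl, hx ▸ hxy⟩)⟩⟩ :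
              (G.clasp v₁ v₃).Adj y v₁)).reachable.symm
    · rw [if_neg hx]
      by_cases hy : y = v₃
      · rw [if_pos hy]
        by_cases hx1 : x = v₁
        · rw [hx1]
        · exact (clasp_adj.2 ⟨hx1,
            Or.inr ⟨hx, h13, Or.inr (Or.inr ⟨rfl, hy ▸ hxy.symm⟩)⟩⟩ :
              (G.clasp v₁ v₃).Adj x v₁).reachable
      · rw [if_neg hy]
        exact (clasp_adj.2 ⟨hxy.ne, Or.inr ⟨hx, hy, Or.inl hxy⟩⟩).reachable
  have lift : ∀ {x y : V}, G.Reachable x y →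
      (G.clasp v₁ v₃).Reachable (if x = v₃ then v₁ else x) (if y = v₃ then v₁ else y) := by
    intro x y hr
    obtain ⟨w⟩ := hr
    induction w with
    | nil => rfl
    | cons h p ih => exact (key _ _ h).trans ih
  have base : ∀ x, (G.clasp v₁ v₃).Reachable x (if x = v₃ then v₁ else x) := by
    intro x
    by_cases hx : x = v₃
    · rw [if_pos hx, hx]
      exact hadj31.reachable
    · rw [if_neg hx]
  rw [connected_iff]
  exact ⟨fun x y => ((base x).trans (lift (hG.preconnected x y))).trans (base y).symm,
    hG.nonempty⟩

lemma clasp_edge_subset (G : SimpleGraph V) {v₁ v₃ : V} (h13 : v₁ ≠ v₃) :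
    (G.clasp v₁ v₃).edgeSet ⊆
      insert s(v₁, v₃) ((G.edgeSet \ G.incidenceSet v₃) ∪
        ((fun w => s(v₁, w)) '' (G.neighborSet v₃ \ insert v₁ (G.neighborSet v₁)))) := by
  intro e
  induction e using Sym2.ind with
  | _ x y =>
    intro he
    rw [SimpleGraph.mem_edgeSet, clasp_adj] at he
    obtain ⟨hne, he | ⟨hx3, hy3, he⟩⟩ := he
    · exact Set.mem_insert_iff.mpr (Or.inl he)
    · refine Set.mem_insert_iff.mpr (Or.inr ?_)
      have hmain : ∀ z : V, z ≠ v₁ → z ≠ v₃ → G.Adj v₃ z →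
          s(v₁, z) ∈ (G.edgeSet \ G.incidenceSet v₃) ∪
            ((fun w => s(v₁, w)) '' (G.neighborSet v₃ \ insert v₁ (G.neighborSet v₁))) := by
        intro z hz1 hz3 hz
        by_cases hzn : z ∈ G.neighborSet v₁
        · left
          refine ⟨(G.mem_edgeSet).2 hzn, fun hmem => ?_⟩
          rcases Sym2.mem_iff.1 hmem.2 with h | h
          · exact h13 h.symm
          · exact hz3 h.symm
        · right
          exact ⟨z, ⟨hz, fun hmem => by
            rcases Set.mem_insert_iff.1 hmem with h | h
            · exact hz1 h
            · exact hzn h⟩, rfl⟩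
      rcases he with he | ⟨rfl, he⟩ | ⟨rfl, he⟩
      · left
        refine ⟨(G.mem_edgeSet).2 he, fun hmem => ?_⟩
        rcases Sym2.mem_iff.1 hmem.2 with h | h
        · exact hx3 h.symm
        · exact hy3 h.symm
      · exact hmain y (fun h => hne h.symm) hy3 he
      · rw [Sym2.eq_swap]
        exact hmain x hne hx3 he

lemma clasp_ncard [Finite V] (G : SimpleGraph V) {v₁ v₃ : V} (h13 : v₁ ≠ v₃) :
    (G.clasp v₁ v₃).edgeSet.ncard + (G.neighborSet v₃).ncard ≤
      G.edgeSet.ncard + 1 + ((G.neighborSet v₃) \ insert v₁ (G.neighborSet v₁)).ncard := by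
  classical
  have hIE : G.incidenceSet v₃ ⊆ G.edgeSet := G.incidenceSet_subset v₃
  have hIN : (G.incidenceSet v₃).ncard = (G.neighborSet v₃).ncard := by
    rw [← Nat.card_coe_set_eq, ← Nat.card_coe_set_eq]
    exact Nat.card_congr (G.incidenceSetEquivNeighborSet v₃)
  have hI_le : (G.incidenceSet v₃).ncard ≤ G.edgeSet.ncard := Set.ncard_le_ncard hIE
  have h1 := Set.ncard_le_ncard (clasp_edge_subset G h13)
  have h2 := Set.ncard_insert_le s(v₁, v₃) ((G.edgeSet \ G.incidenceSet v₃) ∪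
        ((fun w => s(v₁, w)) '' (G.neighborSet v₃ \ insert v₁ (G.neighborSet v₁))))
  have h3 := Set.ncard_union_le (G.edgeSet \ G.incidenceSet v₃)
        ((fun w => s(v₁, w)) '' (G.neighborSet v₃ \ insert v₁ (G.neighborSet v₁)))
  have h4 : ((fun w => s(v₁, w)) '' (G.neighborSet v₃ \ insert v₁ (G.neighborSet v₁))).ncard
      ≤ (G.neighborSet v₃ \ insert v₁ (G.neighborSet v₁)).ncard := Set.ncard_image_le
  have h5 : (G.edgeSet \ G.incidenceSet v₃).ncard
      = G.edgeSet.ncard - (G.incidenceSet v₃).ncard := Set.ncard_diff hIE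
  omega

lemma loop_length_zero {G : SimpleGraph V} {a : V} (p : G.Walk a a)
    (h : p.support.Nodup) : p.length = 0 := by
  cases p with
  | nil => rfl
  | cons h' q =>
    exfalso
    simp only [Walk.support_cons, List.nodup_cons] at h
    exact h.1 q.end_mem_support

lemma not_first_edge {G : SimpleGraph V} {a b : V} (p : G.Walk a b)
    (h : p.support.Nodup) (hlen : 2 ≤ p.length) : s(b, a) ∉ p.edges := by
  intro hmem
  cases p with
  | nil => simp at hmem
  | @cons _ c _ h' q =>
    simp only [Walk.edges_cons, List.mem_cons] at hmem
    simp only [Walk.support_cons, List.nodup_cons] at h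
    rcases hmem with hmem | hmem
    · have hbc : b = c := by
        rcases Sym2.eq_iff.1 hmem with ⟨h1, h2⟩ | ⟨h1, h2⟩
        · exact h1.trans h2
        · exact h1
      subst hbc
      have := loop_length_zero q h.2
      simp only [Walk.length_cons] at hlen
      omega
    · exact h.1 (q.snd_mem_support_of_mem_edges hmem)

lemma clasp_step [Finite V] {G : SimpleGraph V} (hconn : G.Connected)
    {u : V} (C : G.Walk u u) (hC : C.IsCycle) (hlen : 4 ≤ C.length) :
    ∃ v₃ : V, u ≠ v₃ ∧ (G.clasp u v₃).Connected ∧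
      (if C.length = 4 then (G.clasp u v₃).edgeSet.ncard + 1 ≤ G.edgeSet.ncard
       else ((G.clasp u v₃).edgeSet.ncard ≤ G.edgeSet.ncard ∧
         ∃ D : (G.clasp u v₃).Walk u u, D.IsCycle ∧ D.length = C.length - 2)) := by
  classical
  cases C with
  | nil => simp at hlen
  | @cons _ v₂ _ h₁ C₁ =>
    cases C₁ with
    | nil => simp at hlen
    | @cons _ v₃ _ h₂ C₂ =>
      cases C₂ with
      | nil => simp at hlen
      | @cons _ v₄ _ h₃ C₃ =>
        have hnd : (v₂ :: v₃ :: C₃.support).Nodup := by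
          simpa using hC.support_nodup
        rw [List.nodup_cons, List.nodup_cons] at hnd
        obtain ⟨hv₂, hv₃, hnd₃⟩ := hnd
        have hu3 : u ≠ v₃ := fun h => hv₃ (h ▸ C₃.end_mem_support)
        have hv₄3 : v₄ ≠ v₃ := fun h => hv₃ (h ▸ C₃.start_mem_support)
        have hconn' := clasp_connected hconn hu3
        refine ⟨v₃, hu3, hconn', ?_⟩
        have hv₂N₃ : v₂ ∈ G.neighborSet v₃ := h₂.symm
        have hv₂N₁ : v₂ ∈ insert u (G.neighborSet u) := Set.mem_insert_iff.2 (Or.inr h₁)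
        have hbase := clasp_ncard G hu3
        have hd1 : 1 ≤ (G.neighborSet v₃).ncard :=
          (Set.ncard_pos (Set.toFinite _)).2 ⟨v₂, hv₂N₃⟩
        have hL : (Walk.cons h₁ (Walk.cons h₂ (Walk.cons h₃ C₃))).length = C₃.length + 3 := by
          simp [Walk.length_cons]
        by_cases h4 : (Walk.cons h₁ (Walk.cons h₂ (Walk.cons h₃ C₃))).length = 4
        · rw [if_pos h4]
          have hlen3 : C₃.length = 1 := by omega
          cases C₃ with
          | nil => simp at hlen3
          | @cons _ w _ h₄ C₄ =>
            cases C₄ with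
            | @cons _ _ _ _ _ => simp [Walk.length_cons] at hlen3
            | nil =>
              have hv₂4 : v₂ ≠ v₄ := by
                intro h
                exact hv₂ (by rw [h]; exact List.mem_cons_of_mem _ (Walk.start_mem_support _))
              have hv₄N₃ : v₄ ∈ G.neighborSet v₃ := h₃
              have hv₄N₁ : v₄ ∈ insert u (G.neighborSet u) :=
                Set.mem_insert_iff.2 (Or.inr h₄.symm)
              have hsub : G.neighborSet v₃ \ insert u (G.neighborSet u) ⊆
                  (G.neighborSet v₃ \ {v₂}) \ {v₄} := by
                intro z hz
                refine ⟨⟨hz.1, fun h => ?_⟩, fun h => ?_⟩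
                · rw [Set.mem_singleton_iff] at h
                  exact hz.2 (by rw [h]; exact hv₂N₁)
                · rw [Set.mem_singleton_iff] at h
                  exact hz.2 (by rw [h]; exact hv₄N₁)
              have hmem4 : v₄ ∈ G.neighborSet v₃ \ {v₂} :=
                ⟨hv₄N₃, by simpa using (Ne.symm hv₂4)⟩
              have h2a := Set.ncard_diff_singleton_of_mem hmem4
              have h2b := Set.ncard_diff_singleton_of_mem hv₂N₃
              have h2c := Set.ncard_le_ncard hsub (Set.toFinite _)
              have hd2 : 2 ≤ (G.neighborSet v₃).ncard := by
                have hp := Set.ncard_le_ncard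
                  (Set.insert_subset_iff.2 ⟨hv₂N₃, Set.singleton_subset_iff.2 hv₄N₃⟩)
                  (Set.toFinite _)
                rw [Set.ncard_pair hv₂4] at hp
                exact hp
              omega
        · rw [if_neg h4]
          have hlen3 : 2 ≤ C₃.length := by omega
          have hsub : G.neighborSet v₃ \ insert u (G.neighborSet u) ⊆
              G.neighborSet v₃ \ {v₂} := by
            intro z hz
            refine ⟨hz.1, fun h => ?_⟩
            rw [Set.mem_singleton_iff] at h
            exact hz.2 (by rw [h]; exact hv₂N₁)
          have h2b := Set.ncard_diff_singleton_of_mem hv₂N₃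
          have h2c := Set.ncard_le_ncard hsub (Set.toFinite _)
          refine ⟨by omega, ?_⟩
          have hu4 : u ≠ v₄ := by
            intro h
            subst h
            have := loop_length_zero C₃ hnd₃
            omega
          have hedges : ∀ e ∈ C₃.edges, e ∈ (G.clasp u v₃).edgeSet := by
            intro e
            induction e using Sym2.ind with
            | _ a b =>
              intro he
              have hab : G.Adj a b := C₃.edges_subset_edgeSet he
              have ha : a ∈ C₃.support := C₃.fst_mem_support_of_mem_edges he
              have hb : b ∈ C₃.support := C₃.snd_mem_support_of_mem_edges he
              rw [SimpleGraph.mem_edgeSet, clasp_adj]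
              exact ⟨hab.ne, Or.inr ⟨fun h => hv₃ (h ▸ ha), fun h => hv₃ (h ▸ hb), Or.inl hab⟩⟩
          have hadj : (G.clasp u v₃).Adj u v₄ :=
            clasp_adj.2 ⟨hu4, Or.inr ⟨hu3, hv₄3, Or.inr (Or.inl ⟨rfl, h₃⟩)⟩⟩
          refine ⟨Walk.cons hadj (C₃.transfer _ hedges), ?_, ?_⟩
          · rw [Walk.cons_isCycle_iff]
            constructor
            · rw [Walk.isPath_def, Walk.support_transfer]
              exact hnd₃
            · rw [Walk.edges_transfer]
              exact not_first_edge C₃ hnd₃ hlen3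
          · simp only [Walk.length_cons, Walk.length_transfer]
            omega

lemma exists_delete [Finite V] (G : SimpleGraph V) (hconn : G.Connected)
    (hnac : ¬ G.IsAcyclic) :
    ∃ G' : SimpleGraph V, G'.Connected ∧ G'.edgeSet.ncard + 1 = G.edgeSet.ncard := by
  classical
  rw [SimpleGraph.IsAcyclic] at hnac
  push_neg at hnac
  obtain ⟨v, c, hc⟩ := hnac
  cases c with
  | nil =>
    rw [Walk.isCycle_def] at hc
    exact absurd rfl hc.2.1
  | @cons _ w _ h p =>
    have hmem : s(v, w) ∈ (Walk.cons h p).edges := by simp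
    have hreach : (G \ fromEdgeSet {s(v, w)}).Reachable v w :=
      (SimpleGraph.adj_and_reachable_delete_edges_iff_exists_cycle.2
        ⟨v, Walk.cons h p, hc, hmem⟩).2
    have hadj' : ∀ x y, G.Adj x y → (G \ fromEdgeSet {s(v, w)}).Reachable x y := by
      intro x y hxy
      by_cases he : s(x, y) = s(v, w)
      · rcases Sym2.eq_iff.1 he with ⟨rfl, rfl⟩ | ⟨rfl, rfl⟩
        · exact hreach
        · exact hreach.symm
      · refine SimpleGraph.Adj.reachable ?_
        rw [SimpleGraph.sdiff_adj, SimpleGraph.fromEdgeSet_adj]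
        push_neg
        exact ⟨hxy, fun hh => absurd hh he⟩
    have hpre : (G \ fromEdgeSet {s(v, w)}).Preconnected := by
      intro x y
      obtain ⟨q⟩ := hconn.preconnected x y
      induction q with
      | nil => rfl
      | cons hq q ih => exact (hadj' _ _ hq).trans ih
    have hE : (G \ fromEdgeSet {s(v, w)}).edgeSet = G.edgeSet \ {s(v, w)} := by
      rw [SimpleGraph.edgeSet_sdiff, SimpleGraph.edgeSet_fromEdgeSet,
        SimpleGraph.edgeSet_sdiff_sdiff_isDiag]
    have hmemE : s(v, w) ∈ G.edgeSet := h
    refine ⟨G \ fromEdgeSet {s(v, w)}, (SimpleGraph.connected_iff _).2 ⟨hpre, hconn.nonempty⟩, ?_⟩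
    rw [hE, Set.ncard_diff_singleton_of_mem hmemE]
    have h1 : 1 ≤ G.edgeSet.ncard := (Set.ncard_pos (Set.toFinite _)).2 ⟨_, hmemE⟩
    omega

lemma conn_card_le [Fintype V] :
    ∀ (m : ℕ) (G : SimpleGraph V), G.edgeSet.ncard = m → G.Connected →
      Fintype.card V ≤ m + 1 := by
  intro m
  induction m using Nat.strong_induction_on with
  | _ m ih =>
    intro G hm hconn
    by_cases hac : G.IsAcyclic
    · classical
      have ht : G.IsTree := ⟨hconn, hac⟩
      have hcard := ht.card_edgeFinset
      have heq : G.edgeFinset.card = G.edgeSet.ncard := (Set.ncard_eq_toFinset_card' _).symm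
      omega
    · obtain ⟨G', hconn', hE⟩ := exists_delete G hconn hac
      have h1 : G'.edgeSet.ncard < m := by omega
      have := ih _ h1 G' rfl hconn'
      omega

lemma acyclic_of_card [Fintype V] (G : SimpleGraph V) (hconn : G.Connected)
    (hcard : G.edgeSet.ncard + 1 ≤ Fintype.card V) : G.IsAcyclic := by
  by_contra hac
  obtain ⟨G', hconn', hE⟩ := exists_delete G hconn hac
  have := conn_card_le _ G' rfl hconn'
  omega

lemma main_ind [Fintype V] :
    ∀ (n : ℕ) (G : SimpleGraph V), G.Connected → G.edgeSet.ncard ≤ Fintype.card V →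
      ∀ (u : V) (C : G.Walk u u), C.IsCycle → C.length = 2 * n + 4 →
      ∃ Gs : ℕ → SimpleGraph V, Gs 0 = G ∧
        (∀ i < n + 1, ∃ a b : V, a ≠ b ∧ Gs (i + 1) = (Gs i).clasp a b) ∧
        (Gs (n + 1)).Connected ∧ (Gs (n + 1)).IsAcyclic := by
  intro n
  induction n with
  | zero =>
    intro G hconn hcard u C hC hlen
    obtain ⟨v₃, hne, hconn', hbound⟩ := clasp_step hconn C hC (by omega)
    rw [if_pos (show C.length = 4 by omega)] at hbound
    refine ⟨fun i => if i = 0 then G else G.clasp u v₃, rfl, ?_, ?_, ?_⟩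
    · intro i hi
      have hi0 : i = 0 := by omega
      subst hi0
      exact ⟨u, v₃, hne, by norm_num⟩
    · simpa using hconn'
    · have hfin : (G.clasp u v₃).edgeSet.ncard + 1 ≤ Fintype.card V := by omega
      simpa using acyclic_of_card _ hconn' hfin
  | succ n ih =>
    intro G hconn hcard u C hC hlen
    obtain ⟨v₃, hne, hconn', hbound⟩ := clasp_step hconn C hC (by omega)
    rw [if_neg (show ¬ C.length = 4 by omega)] at hbound
    obtain ⟨hle, D, hD, hDlen⟩ := hbound
    obtain ⟨Gs, h0, hstep, hconn'', hac⟩ :=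
      ih (G.clasp u v₃) hconn' (le_trans hle hcard) u D hD (by omega)
    refine ⟨fun i => if i = 0 then G else Gs (i - 1), rfl, ?_, ?_, ?_⟩
    · intro i hi
      cases i with
      | zero =>
        refine ⟨u, v₃, hne, ?_⟩
        norm_num [h0]
      | succ j =>
        obtain ⟨a, b, hab, heq⟩ := hstep j (by omega)
        refine ⟨a, b, hab, ?_⟩
        simpa using heq
    · simpa using hconn''
    · simpa using hac

end ClaspAux

/-- Let `G` be a connected simple graph on a finite vertex type whose
number of edges equals its number of vertices, and suppose `G` contains a cycle of even
length `k ≥ 4`. Then there is a sequence of graphs `G = G₀, G₁, …, G_{(k-2)/2}` on the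
same vertex type such that each `G_{i+1}` is the clasp of `G_i` at some pair of distinct
vertices, and the final graph `G_{(k-2)/2}` is a tree (connected and acyclic). -/
theorem stmt_8 {V : Type*} [Fintype V] [DecidableEq V]
    (G : SimpleGraph V) [DecidableRel G.Adj]
    (hconn : G.Connected)
    (hcard : G.edgeFinset.card = Fintype.card V)
    (k : ℕ) (hke : Even k) (hk4 : 4 ≤ k)
    (u : V) (C : G.Walk u u) (hC : C.IsCycle) (hk : C.length = k) :
    ∃ Gs : ℕ → SimpleGraph V,
      Gs 0 = G ∧
      (∀ i < (k - 2) / 2,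
        ∃ a b : V, a ≠ b ∧ Gs (i + 1) = (Gs i).clasp a b) ∧
      (Gs ((k - 2) / 2)).Connected ∧ (Gs ((k - 2) / 2)).IsAcyclic := by
  obtain ⟨n, hn⟩ : ∃ n : ℕ, k = 2 * n + 4 := by
    obtain ⟨m, hm⟩ := hke
    exact ⟨(k - 4) / 2, by omega⟩
  have hcard' : G.edgeSet.ncard ≤ Fintype.card V := by
    have heq : G.edgeFinset.card = G.edgeSet.ncard := (Set.ncard_eq_toFinset_card' _).symm
    omega
  obtain ⟨Gs, h0, hstep, hconn', hac⟩ :=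
    ClaspAux.main_ind n G hconn hcard' u C hC (by omega)
  have hk2 : (k - 2) / 2 = n + 1 := by omega
  rw [hk2]
  exact ⟨Gs, h0, hstep, hconn', hac⟩
end
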